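/- Let a > 0 and define G(τ) := δ₀(τ) − e^{−aτ} sin(τ) 𝟙_{[0,∞)}(τ) interpreted as follows: suppose ρ, H : [0,∞) → ℂ are continuous and satisfy the Volterra equation ρ(t) + ∫₀ᵗ (t−s) e^{−a(t−s)} ρ(s) ds = H(t) for all t ≥ 0, where the convolution kernel r e^{−ar} arises from a = |ξ|. Then ρ(t) = H(t) − ∫₀ᵗ e^{−as} sin(s) H(t−s) ds for all t ≥ 0. -/

import Mathlib

open MeasureTheory Set

lemma fubini_tri {f : ℝ → ℝ → ℂ} (hf : Continuous (Function.uncurry f)) (t : ℝ) (ht : 0 ≤ t) :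
    ∫ s in (0:ℝ)..t, ∫ u in (0:ℝ)..(t-s), f s u
      = ∫ u in (0:ℝ)..t, ∫ s in (0:ℝ)..(t-u), f s u := by
  set F : ℝ × ℝ → ℂ := ({p : ℝ × ℝ | p.1 + p.2 ≤ t}).indicator (Function.uncurry f) with hF
  have hclosed : IsClosed {p : ℝ × ℝ | p.1 + p.2 ≤ t} :=
    isClosed_le (continuous_fst.add continuous_snd) continuous_const
  have hFm : StronglyMeasurable F := hf.stronglyMeasurable.indicator hclosed.measurableSet
  obtain ⟨C, hC⟩ := ((isCompact_Icc (a := (0:ℝ)) (b := t)).prod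
    (isCompact_Icc (a := (0:ℝ)) (b := t))).exists_bound_of_continuousOn hf.continuousOn
  have hμ : ((volume.restrict (Ioc (0:ℝ) t)).prod (volume.restrict (Ioc (0:ℝ) t)))
      = (volume.prod volume).restrict ((Ioc (0:ℝ) t) ×ˢ (Ioc (0:ℝ) t)) :=
    Measure.prod_restrict _ _
  have hint : Integrable F ((volume.restrict (Ioc (0:ℝ) t)).prod (volume.restrict (Ioc (0:ℝ) t))) := by
    rw [hμ]
    have hfin : (volume.prod volume) ((Ioc (0:ℝ) t) ×ˢ (Ioc (0:ℝ) t)) < ⊤ := by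
      rw [Measure.prod_prod]
      exact ENNReal.mul_lt_top (by simp) (by simp)
    refine Integrable.mono' ((integrableOn_const_iff (C := C)).mpr (Or.inr hfin))
      hFm.aestronglyMeasurable ?_
    · filter_upwards [ae_restrict_mem ((measurableSet_Ioc).prod measurableSet_Ioc)] with p hp
      calc ‖F p‖ ≤ ‖Function.uncurry f p‖ := norm_indicator_le_norm_self _ _
        _ ≤ C := hC p ⟨Ioc_subset_Icc_self hp.1, Ioc_subset_Icc_self hp.2⟩
  have key1 : ∀ s ∈ Ioc (0:ℝ) t, (∫ u in (0:ℝ)..(t-s), f s u) = ∫ u in Ioc (0:ℝ) t, F (s, u) := by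
    intro s hs
    have h1 : (0:ℝ) ≤ t - s := by linarith [hs.2]
    rw [intervalIntegral.integral_of_le h1]
    have : ∀ u, F (s, u) = (Iic (t-s)).indicator (f s) u := by
      intro u
      simp only [hF, indicator, mem_setOf_eq, mem_Iic, Function.uncurry]
      congr 1
      simp only [eq_iff_iff]; constructor <;> intro h <;> linarith
    simp_rw [this]
    rw [setIntegral_indicator measurableSet_Iic, Ioc_inter_Iic]
    congr 1
    rw [min_eq_right (by linarith [hs.1] : t - s ≤ t)]
  have key2 : ∀ u ∈ Ioc (0:ℝ) t, (∫ s in (0:ℝ)..(t-u), f s u) = ∫ s in Ioc (0:ℝ) t, F (s, u) := by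
    intro u hu
    have h1 : (0:ℝ) ≤ t - u := by linarith [hu.2]
    rw [intervalIntegral.integral_of_le h1]
    have : ∀ s, F (s, u) = (Iic (t-u)).indicator (fun s => f s u) s := by
      intro s
      simp only [hF, indicator, mem_setOf_eq, mem_Iic, Function.uncurry]
      congr 1
      simp only [eq_iff_iff]; constructor <;> intro h <;> linarith
    simp_rw [this]
    rw [setIntegral_indicator measurableSet_Iic, Ioc_inter_Iic]
    congr 1
    rw [min_eq_right (by linarith [hu.1] : t - u ≤ t)]
  rw [intervalIntegral.integral_of_le ht, intervalIntegral.integral_of_le ht]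
  calc ∫ s in Ioc (0:ℝ) t, ∫ u in (0:ℝ)..(t-s), f s u
      = ∫ s in Ioc (0:ℝ) t, ∫ u in Ioc (0:ℝ) t, F (s, u) :=
        setIntegral_congr_fun measurableSet_Ioc (fun s hs => key1 s hs)
    _ = ∫ u in Ioc (0:ℝ) t, ∫ s in Ioc (0:ℝ) t, F (s, u) := integral_integral_swap hint
    _ = ∫ u in Ioc (0:ℝ) t, ∫ s in (0:ℝ)..(t-u), f s u :=
        setIntegral_congr_fun measurableSet_Ioc (fun u hu => (key2 u hu).symm)

lemma conv_id (a r : ℝ) :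
    ∫ s in (0:ℝ)..r, (Real.exp (-(a*s)) * Real.sin s) * ((r-s) * Real.exp (-(a*(r-s))))
      = r * Real.exp (-(a*r)) - Real.exp (-(a*r)) * Real.sin r := by
  have h1 : ∀ s : ℝ, (Real.exp (-(a*s)) * Real.sin s) * ((r-s) * Real.exp (-(a*(r-s))))
      = Real.exp (-(a*r)) * ((r - s) * Real.sin s) := by
    intro s
    have h : Real.exp (-(a*s)) * Real.exp (-(a*(r-s))) = Real.exp (-(a*r)) := by
      rw [← Real.exp_add]; ring_nf
    linear_combination (Real.sin s * (r - s)) * h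
  simp_rw [h1]
  rw [intervalIntegral.integral_const_mul]
  have h2 : ∫ s in (0:ℝ)..r, (r - s) * Real.sin s = r - Real.sin r := by
    have hd : ∀ x ∈ Set.uIcc (0:ℝ) r,
        HasDerivAt (fun s => -((r-s)*Real.cos s) - Real.sin s) ((r-x)*Real.sin x) x := by
      intro x _
      have h3 : HasDerivAt (fun s : ℝ => (r-s)*Real.cos s)
          ((0 - 1) * Real.cos x + (r-x)*(-Real.sin x)) x :=
        ((hasDerivAt_const x r).sub (hasDerivAt_id x)).mul (Real.hasDerivAt_cos x)
      have h4 : HasDerivAt (fun s => -((r-s)*Real.cos s) - Real.sin s) _ x := (h3.neg).sub (Real.hasDerivAt_sin x)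
      convert h4 using 1; ring
    rw [intervalIntegral.integral_eq_sub_of_hasDerivAt hd
      (((continuous_const.sub continuous_id).mul Real.continuous_sin).intervalIntegrable 0 r)]
    simp
    ring
  rw [h2]; ring

lemma main_aux (a : ℝ) (ρ H : ℝ → ℂ) (hρ : Continuous ρ) (hH : Continuous H)
    (heq : ∀ t : ℝ, 0 ≤ t →
      ρ t + ∫ s in (0:ℝ)..t, (((t - s) * Real.exp (-(a * (t - s))) : ℝ) : ℂ) * ρ s = H t) :
    ∀ t : ℝ, 0 ≤ t →
      ρ t = H t - ∫ s in (0:ℝ)..t,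
        ((Real.exp (-(a * s)) * Real.sin s : ℝ) : ℂ) * H (t - s) := by
  intro t ht
  have hIcc : Set.uIcc (0:ℝ) t = Set.Icc 0 t := Set.uIcc_of_le ht
  -- continuity helpers
  have hRc : Continuous (fun s : ℝ => ((Real.exp (-(a * s)) * Real.sin s : ℝ) : ℂ)) := by
    exact Complex.continuous_ofReal.comp
      (((Real.continuous_exp.comp (continuous_const.mul continuous_id).neg)).mul Real.continuous_sin)
  have hKc : Continuous (fun s : ℝ => (((t - s) * Real.exp (-(a * (t - s))) : ℝ) : ℂ)) := by
    exact Complex.continuous_ofReal.comp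
      (((continuous_const.sub continuous_id)).mul
        (Real.continuous_exp.comp ((continuous_const.mul (continuous_const.sub continuous_id)).neg)))
  have int1 : IntervalIntegrable
      (fun s => ((Real.exp (-(a * s)) * Real.sin s : ℝ) : ℂ) * H (t - s)) volume 0 t :=
    (hRc.mul (hH.comp (continuous_const.sub continuous_id))).intervalIntegrable 0 t
  have int2 : IntervalIntegrable
      (fun s => ((Real.exp (-(a * s)) * Real.sin s : ℝ) : ℂ) * ρ (t - s)) volume 0 t :=
    (hRc.mul (hρ.comp (continuous_const.sub continuous_id))).intervalIntegrable 0 t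
  have int3 : IntervalIntegrable
      (fun u => (((t - u) * Real.exp (-(a * (t - u))) : ℝ) : ℂ) * ρ u) volume 0 t :=
    (hKc.mul hρ).intervalIntegrable 0 t
  have int4 : IntervalIntegrable
      (fun u => ((Real.exp (-(a * (t - u))) * Real.sin (t - u) : ℝ) : ℂ) * ρ u) volume 0 t := by
    refine (Continuous.mul ?_ hρ).intervalIntegrable 0 t
    exact Complex.continuous_ofReal.comp
      ((Real.continuous_exp.comp ((continuous_const.mul (continuous_const.sub continuous_id)).neg)).mul
        (Real.continuous_sin.comp (continuous_const.sub continuous_id)))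
  -- the convolution with the kernel, as a function
  set g : ℝ → ℂ := fun r => ∫ u in (0:ℝ)..r, (((r - u) * Real.exp (-(a * (r - u))) : ℝ) : ℂ) * ρ u
    with hg
  -- Step A
  have stepA : (∫ s in (0:ℝ)..t, ((Real.exp (-(a * s)) * Real.sin s : ℝ) : ℂ) * H (t - s))
      - (∫ s in (0:ℝ)..t, ((Real.exp (-(a * s)) * Real.sin s : ℝ) : ℂ) * ρ (t - s))
      = ∫ s in (0:ℝ)..t, ((Real.exp (-(a * s)) * Real.sin s : ℝ) : ℂ) * g (t - s) := by
    rw [← intervalIntegral.integral_sub int1 int2]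
    apply intervalIntegral.integral_congr
    intro s hs
    rw [hIcc] at hs
    have hts : (0:ℝ) ≤ t - s := by linarith [hs.2]
    have := heq (t - s) hts
    dsimp only
    rw [← this]
    simp only [hg]
    ring
  -- Step B + C + D : Fubini and the inner convolution identity
  set f : ℝ → ℝ → ℂ := fun s u =>
    ((Real.exp (-(a * s)) * Real.sin s : ℝ) : ℂ) *
      ((((t - s - u) * Real.exp (-(a * (t - s - u)))) : ℝ) : ℂ) * ρ u with hf
  have hfc : Continuous (Function.uncurry f) := by
    apply Continuous.mul
    apply Continuous.mul
    · exact Complex.continuous_ofReal.comp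
        (((Real.continuous_exp.comp (continuous_const.mul continuous_fst).neg)).mul
          (Real.continuous_sin.comp continuous_fst))
    · exact Complex.continuous_ofReal.comp
        (((continuous_const.sub continuous_fst).sub continuous_snd).mul
          (Real.continuous_exp.comp
            ((continuous_const.mul ((continuous_const.sub continuous_fst).sub continuous_snd)).neg)))
    · exact hρ.comp continuous_snd
  have stepB : (∫ s in (0:ℝ)..t, ((Real.exp (-(a * s)) * Real.sin s : ℝ) : ℂ) * g (t - s))
      = ∫ u in (0:ℝ)..t, ∫ s in (0:ℝ)..(t - u), f s u := by
    rw [← fubini_tri hfc t ht]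
    apply intervalIntegral.integral_congr
    intro s _
    simp only [hg, hf]
    rw [← intervalIntegral.integral_const_mul]
    apply intervalIntegral.integral_congr
    intro u _
    ring
  have stepC : (∫ u in (0:ℝ)..t, ∫ s in (0:ℝ)..(t - u), f s u)
      = ∫ u in (0:ℝ)..t, ((((t - u) * Real.exp (-(a * (t - u)))
          - Real.exp (-(a * (t - u))) * Real.sin (t - u)) : ℝ) : ℂ) * ρ u := by
    apply intervalIntegral.integral_congr
    intro u hu
    rw [hIcc] at hu
    have h1 : ∀ s : ℝ, f s u
        = (((Real.exp (-(a * s)) * Real.sin s) * ((t - u - s) * Real.exp (-(a * (t - u - s)))) : ℝ) : ℂ)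
            * ρ u := by
      intro s
      simp only [hf]
      have : t - s - u = t - u - s := by ring
      rw [this]
      push_cast
      ring
    simp_rw [h1]
    rw [intervalIntegral.integral_mul_const, intervalIntegral.integral_ofReal, conv_id a (t - u)]
  have stepD : (∫ u in (0:ℝ)..t, ((((t - u) * Real.exp (-(a * (t - u)))
          - Real.exp (-(a * (t - u))) * Real.sin (t - u)) : ℝ) : ℂ) * ρ u)
      = (∫ u in (0:ℝ)..t, (((t - u) * Real.exp (-(a * (t - u))) : ℝ) : ℂ) * ρ u)
        - ∫ u in (0:ℝ)..t, ((Real.exp (-(a * (t - u))) * Real.sin (t - u) : ℝ) : ℂ) * ρ u := by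
    rw [← intervalIntegral.integral_sub int3 int4]
    apply intervalIntegral.integral_congr
    intro u _
    push_cast
    ring
  -- Step E : change of variables in the ρ term
  have stepE : (∫ s in (0:ℝ)..t, ((Real.exp (-(a * s)) * Real.sin s : ℝ) : ℂ) * ρ (t - s))
      = ∫ u in (0:ℝ)..t, ((Real.exp (-(a * (t - u))) * Real.sin (t - u) : ℝ) : ℂ) * ρ u := by
    have := intervalIntegral.integral_comp_sub_left
      (a := (0:ℝ)) (b := t)
      (fun u => ((Real.exp (-(a * (t - u))) * Real.sin (t - u) : ℝ) : ℂ) * ρ u) t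
    simp only [sub_zero, sub_self] at this
    rw [← this]
    apply intervalIntegral.integral_congr
    intro s _
    have h : t - (t - s) = s := by ring
    dsimp only
    rw [h]
  -- combine
  have key : (∫ s in (0:ℝ)..t, ((Real.exp (-(a * s)) * Real.sin s : ℝ) : ℂ) * H (t - s))
      = ∫ u in (0:ℝ)..t, (((t - u) * Real.exp (-(a * (t - u))) : ℝ) : ℂ) * ρ u := by
    rw [stepB, stepC, stepD] at stepA
    rw [stepE] at stepA
    linear_combination stepA
  rw [key]
  linear_combination heq t ht

theorem stmt3 (a : ℝ) (ha : 0 < a) (ρ H : ℝ → ℂ)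
    (hρ : ContinuousOn ρ (Set.Ici 0)) (hH : ContinuousOn H (Set.Ici 0))
    (heq : ∀ t : ℝ, 0 ≤ t →
      ρ t + ∫ s in (0:ℝ)..t, (((t - s) * Real.exp (-(a * (t - s))) : ℝ) : ℂ) * ρ s = H t) :
    ∀ t : ℝ, 0 ≤ t →
      ρ t = H t - ∫ s in (0:ℝ)..t,
        ((Real.exp (-(a * s)) * Real.sin s : ℝ) : ℂ) * H (t - s) := by
  set ρ' : ℝ → ℂ := fun u => ρ (max u 0) with hρ'
  set H' : ℝ → ℂ := fun u => H (max u 0) with hH'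
  have hcm : Continuous (fun u : ℝ => max u 0) := continuous_id.max continuous_const
  have hρ'c : Continuous ρ' := hρ.comp_continuous hcm (fun x => le_max_right x 0)
  have hH'c : Continuous H' := hH.comp_continuous hcm (fun x => le_max_right x 0)
  have hagreeρ : ∀ u : ℝ, 0 ≤ u → ρ' u = ρ u := by
    intro u hu; simp only [hρ', max_eq_left hu]
  have hagreeH : ∀ u : ℝ, 0 ≤ u → H' u = H u := by
    intro u hu; simp only [hH', max_eq_left hu]
  have heq' : ∀ t : ℝ, 0 ≤ t →
      ρ' t + ∫ s in (0:ℝ)..t, (((t - s) * Real.exp (-(a * (t - s))) : ℝ) : ℂ) * ρ' s = H' t := by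
    intro t ht
    rw [hagreeρ t ht, hagreeH t ht]
    rw [← heq t ht]
    congr 1
    apply intervalIntegral.integral_congr
    intro s hs
    rw [Set.uIcc_of_le ht] at hs
    dsimp only
    rw [hagreeρ s hs.1]
  intro t ht
  have := main_aux a ρ' H' hρ'c hH'c heq' t ht
  rw [hagreeρ t ht, hagreeH t ht] at this
  rw [this]
  congr 1
  apply intervalIntegral.integral_congr
  intro s hs
  rw [Set.uIcc_of_le ht] at hs
  exact congrArg (HMul.hMul _) (hagreeH (t - s) (by linarith [hs.2]))
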